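/- arXiv:2402.08651 — 4 statements merged into one kernel-verified Lean document; each statement's English description precedes it below -/
import Mathlib

section
/- Let s ≥ t ≥ 2, n ≥ 2s + t − 1, let F' be the lantern construction and F = F' ∪ F_5 the completed construction. Then F is induced K_{s,t}-saturated. -/
open Finset

/-- A family of finite sets contains an induced copy of the complete bipartite
poset `K_{s,t}`: `s` pairwise incomparable "upper" sets and `t` pairwise
incomparable "lower" sets, each lower set strictly contained in each upper set. -/
def ContainsIndKst (s t : ℕ) (F : Finset (Finset ℕ)) : Prop :=
  ∃ (U : Fin s → Finset ℕ) (D : Fin t → Finset ℕ),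
    (∀ i, U i ∈ F) ∧ (∀ j, D j ∈ F) ∧
    (∀ i j, i ≠ j → ¬ U i ⊆ U j) ∧
    (∀ i j, i ≠ j → ¬ D i ⊆ D j) ∧
    (∀ i j, D j ⊂ U i)

/-- `F ⊆ 2^[n]` is induced `K_{s,t}`-saturated. -/
def IsIndKstSaturated (n s t : ℕ) (F : Finset (Finset ℕ)) : Prop :=
  (∀ A ∈ F, A ⊆ Finset.Icc 1 n) ∧
  ¬ ContainsIndKst s t F ∧
  ∀ G ⊆ Finset.Icc 1 n, G ∉ F → ContainsIndKst s t (insert G F)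

/-- `sat*(n, K_{s,t})`: minimum size of an induced `K_{s,t}`-saturated family in `2^[n]`. -/
noncomputable def satStarKst (n s t : ℕ) : ℕ :=
  sInf {m | ∃ F : Finset (Finset ℕ), IsIndKstSaturated n s t F ∧ F.card = m}

/-- `C` is a complete chain from `A` to `B`: totally ordered by inclusion,
with minimum `A`, maximum `B`, and `|C| = |B \ A| + 1`. -/
def IsCompleteChain (A B : Finset ℕ) (C : Finset (Finset ℕ)) : Prop :=
  A ∈ C ∧ B ∈ C ∧ (∀ X ∈ C, A ⊆ X ∧ X ⊆ B) ∧
  (∀ X ∈ C, ∀ Y ∈ C, X ⊆ Y ∨ Y ⊆ X) ∧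
  C.card = (B \ A).card + 1

/-- The first increment set of `L` (w.r.t. bottom `A`): the union of the sets in
`L` of size `|A| + 1`, minus `A`. -/
def firstIncrementSet (A : Finset ℕ) (L : Finset (Finset ℕ)) : Finset ℕ :=
  ((L.filter fun X => X.card = A.card + 1).sup id) \ A

/-- The last increment set of `L` (w.r.t. top `B`): `B` minus the intersection of
the sets in `L` of size `|B| - 1`. -/
def lastIncrementSet (B : Finset ℕ) (L : Finset (Finset ℕ)) : Finset ℕ :=
  B.filter fun x => ∃ X ∈ L, X.card = B.card - 1 ∧ x ∉ X

/-- `L` is a union of `k` pairwise internally disjoint complete chains from `A` to `B`. -/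
def IsLanternUnion (A B : Finset ℕ) (k : ℕ) (L : Finset (Finset ℕ)) : Prop :=
  ∃ C : Fin k → Finset (Finset ℕ),
    (∀ i, IsCompleteChain A B (C i)) ∧
    (∀ i j, i ≠ j → C i ∩ C j = {A, B}) ∧
    L = Finset.univ.biUnion C

/-- An upper `s`-lantern on `A`: a union of `s - 1` pairwise internally disjoint
complete chains from `A` to `A ∪ [s+t+1, n]` whose last increment set is
`[s+t+1, 2s+t-1]`. -/
def IsUpperLantern (n s t : ℕ) (A : Finset ℕ) (L : Finset (Finset ℕ)) : Prop :=
  IsLanternUnion A (A ∪ Finset.Icc (s+t+1) n) (s-1) L ∧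
  lastIncrementSet (A ∪ Finset.Icc (s+t+1) n) L = Finset.Icc (s+t+1) (2*s+t-1)

/-- A lower `t`-lantern on `A`: a union of `t - 1` pairwise internally disjoint
complete chains from `A` to `A ∪ [s+t+1, n]` whose first increment set is
`[s+t+1, s+2t-1]`. -/
def IsLowerLantern (n s t : ℕ) (A : Finset ℕ) (L : Finset (Finset ℕ)) : Prop :=
  IsLanternUnion A (A ∪ Finset.Icc (s+t+1) n) (t-1) L ∧
  firstIncrementSet A L = Finset.Icc (s+t+1) (s+2*t-1)

/-- `F₁ = {[n]} ∪ {[n] \ {x} : x ∈ [s+t-1]}`. -/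
def lanternF1 (n s t : ℕ) : Finset (Finset ℕ) :=
  insert (Finset.Icc 1 n) ((Finset.Icc 1 (s+t-1)).image fun x => (Finset.Icc 1 n).erase x)

/-- `F₂`: union over all `t`-element subsets `A` of `[s+t-1]` of the chosen upper lantern `Ls A`. -/
def lanternF2 (s t : ℕ) (Ls : Finset ℕ → Finset (Finset ℕ)) : Finset (Finset ℕ) :=
  (Finset.powersetCard t (Finset.Icc 1 (s+t-1))).biUnion Ls

/-- `F₃`: union over all `(t-1)`-element subsets `A` of `[s+t-1]` of the chosen
lower lantern `Lt (A ∪ {s+t})`. -/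
def lanternF3 (s t : ℕ) (Lt : Finset ℕ → Finset (Finset ℕ)) : Finset (Finset ℕ) :=
  (Finset.powersetCard (t-1) (Finset.Icc 1 (s+t-1))).biUnion fun A => Lt (insert (s+t) A)

/-- `F₄ = {∅} ∪ {{x} : x ∈ [s+t-1]}`. -/
def lanternF4 (s t : ℕ) : Finset (Finset ℕ) :=
  insert ∅ ((Finset.Icc 1 (s+t-1)).image fun x => ({x} : Finset ℕ))

/-- The lantern construction `F' = F₁ ∪ F₂ ∪ F₃ ∪ F₄`. -/
def lanternFam (n s t : ℕ) (Ls Lt : Finset ℕ → Finset (Finset ℕ)) : Finset (Finset ℕ) :=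
  lanternF1 n s t ∪ lanternF2 s t Ls ∪ lanternF3 s t Lt ∪ lanternF4 s t

/-- `G₁ = ⋃_{i=2}^{s} {[n] \ A : A an i-element subset of [2s+t-1]}`. -/
def lanternG1 (n s t : ℕ) : Finset (Finset ℕ) :=
  (Finset.Icc 2 s).biUnion fun i =>
    (Finset.powersetCard i (Finset.Icc 1 (2*s+t-1))).image fun A => Finset.Icc 1 n \ A

/-- `G₂ = ⋃_{i=2}^{t} {A : A an i-element subset of [s+2t-1]}`. -/
def lanternG2 (s t : ℕ) : Finset (Finset ℕ) :=
  (Finset.Icc 2 t).biUnion fun i => Finset.powersetCard i (Finset.Icc 1 (s+2*t-1))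


namespace Stmt11Aux

open Finset

lemma exists_inj_fun {Z : Finset ℕ} {k : ℕ} (h : k ≤ Z.card) :
    ∃ f : Fin k → ℕ, Function.Injective f ∧ ∀ i, f i ∈ Z := by
  obtain ⟨W, hWZ, hW⟩ := Finset.exists_subset_card_eq h
  refine ⟨fun i => (W.equivFin.symm (Fin.cast hW.symm i) : ℕ), ?_, ?_⟩
  · intro i j hij
    have h2 : (Fin.cast hW.symm i) = (Fin.cast hW.symm j) :=
      W.equivFin.symm.injective (Subtype.ext hij)
    apply Fin.ext
    have h3 := congrArg Fin.val h2
    simpa using h3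
  · intro i; exact hWZ (W.equivFin.symm (Fin.cast hW.symm i)).2

lemma chain_exists_card {A B : Finset ℕ} {C : Finset (Finset ℕ)}
    (h : IsCompleteChain A B C) {c : ℕ} (h1 : A.card ≤ c) (h2 : c ≤ B.card) :
    ∃ X ∈ C, X.card = c := by
  obtain ⟨hA, hB, hbet, htot, hcard⟩ := h
  have hAB : A ⊆ B := (hbet A hA).2
  have hABc : A.card ≤ B.card := Finset.card_le_card hAB
  have hinj : Set.InjOn Finset.card (C : Set (Finset ℕ)) := by
    intro X hX Y hY hXY
    rcases htot X hX Y hY with h' | h'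
    · exact Finset.eq_of_subset_of_card_le h' hXY.ge
    · exact (Finset.eq_of_subset_of_card_le h' hXY.le).symm
  have himg : C.image Finset.card = Finset.Icc A.card B.card := by
    apply Finset.eq_of_subset_of_card_le
    · intro c' hc'
      simp only [Finset.mem_image] at hc'
      obtain ⟨X, hX, rfl⟩ := hc'
      exact Finset.mem_Icc.2 ⟨Finset.card_le_card (hbet X hX).1,
        Finset.card_le_card (hbet X hX).2⟩
    · rw [Finset.card_image_of_injOn hinj, hcard, Finset.card_sdiff_of_subset hAB, Nat.card_Icc]
      omega
  have hc : c ∈ C.image Finset.card := by rw [himg]; exact Finset.mem_Icc.2 ⟨h1, h2⟩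
  simpa [Finset.mem_image, eq_comm] using hc

lemma lantern_mem_between {A B : Finset ℕ} {k : ℕ} {L : Finset (Finset ℕ)}
    (h : IsLanternUnion A B k L) : ∀ X ∈ L, A ⊆ X ∧ X ⊆ B := by
  obtain ⟨C, hC, _, rfl⟩ := h
  intro X hX
  simp only [Finset.mem_biUnion, Finset.mem_univ, true_and] at hX
  obtain ⟨i, hi⟩ := hX
  exact (hC i).2.2.1 X hi

lemma lantern_mem_ends {A B : Finset ℕ} {k : ℕ} {L : Finset (Finset ℕ)}
    (h : IsLanternUnion A B k L) (hk : k ≠ 0) : A ∈ L ∧ B ∈ L := by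
  obtain ⟨C, hC, _, rfl⟩ := h
  have i : Fin k := ⟨0, Nat.pos_of_ne_zero hk⟩
  constructor <;> simp only [Finset.mem_biUnion, Finset.mem_univ, true_and]
  · exact ⟨i, (hC i).1⟩
  · exact ⟨i, (hC i).2.1⟩

lemma lantern_sizes {A B : Finset ℕ} {k : ℕ} {L : Finset (Finset ℕ)}
    (h : IsLanternUnion A B k L) {c : ℕ} (h1 : A.card ≤ c) (h2 : c ≤ B.card) :
    ∃ f : Fin k → Finset ℕ, (∀ i, f i ∈ L ∧ (f i).card = c) ∧
      (A.card < c → c < B.card → Function.Injective f) := by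
  obtain ⟨C, hC, hdisj, rfl⟩ := h
  have hex : ∀ i : Fin k, ∃ X, X ∈ C i ∧ X.card = c := by
    intro i
    obtain ⟨X, hX, hXc⟩ := chain_exists_card (hC i) h1 h2
    exact ⟨X, hX, hXc⟩
  choose f hf1 hf2 using hex
  refine ⟨f, ?_, ?_⟩
  · intro i
    refine ⟨?_, hf2 i⟩
    simp only [Finset.mem_biUnion, Finset.mem_univ, true_and]
    exact ⟨i, hf1 i⟩
  · intro hlt1 hlt2 i j hij
    by_contra hne
    have hmem : f i ∈ C i ∩ C j :=
      Finset.mem_inter.2 ⟨hf1 i, by rw [hij]; exact hf1 j⟩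
    rw [hdisj i j hne] at hmem
    have hc := hf2 i
    rcases Finset.mem_insert.1 hmem with h' | h'
    · rw [h'] at hc; omega
    · rw [Finset.mem_singleton.1 h'] at hc; omega

lemma lantern_penult {A B : Finset ℕ} {k : ℕ} {L : Finset (Finset ℕ)}
    (h : IsLanternUnion A B k L) {y : ℕ} (hy : y ∈ lastIncrementSet B L) :
    B.erase y ∈ L ∧ y ∈ B ∧ y ∉ A := by
  rw [lastIncrementSet, Finset.mem_filter] at hy
  obtain ⟨hyB, X, hXL, hXc, hyX⟩ := hy
  have hbet := lantern_mem_between h X hXL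
  have hXe : X ⊆ B.erase y := Finset.subset_erase.2 ⟨hbet.2, hyX⟩
  have hcard : (B.erase y).card ≤ X.card := by
    rw [Finset.card_erase_of_mem hyB, hXc]
  have hXE : X = B.erase y := Finset.eq_of_subset_of_card_le hXe hcard
  exact ⟨by rw [← hXE]; exact hXL, hyB, fun hyA => hyX (hbet.1 hyA)⟩

lemma lantern_second {A B : Finset ℕ} {k : ℕ} {L : Finset (Finset ℕ)}
    (h : IsLanternUnion A B k L) {z : ℕ} (hz : z ∈ firstIncrementSet A L) :
    insert z A ∈ L ∧ z ∉ A := by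
  rw [firstIncrementSet, Finset.mem_sdiff, Finset.mem_sup] at hz
  obtain ⟨⟨X, hXf, hzX⟩, hzA⟩ := hz
  rw [Finset.mem_filter] at hXf
  obtain ⟨hXL, hXc⟩ := hXf
  have hbet := lantern_mem_between h X hXL
  have hsub : insert z A ⊆ X := Finset.insert_subset hzX hbet.1
  have hcard : X.card ≤ (insert z A).card := by
    rw [Finset.card_insert_of_notMem hzA, hXc]
  have hEq : insert z A = X := Finset.eq_of_subset_of_card_le hsub hcard
  exact ⟨by rw [hEq]; exact hXL, hzA⟩

lemma contains_of_upper {k t s' : ℕ} {F : Finset (Finset ℕ)} {G : Finset ℕ}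
    (hs' : s' = k + 1)
    (U' : Fin k → Finset ℕ) (D : Fin t → Finset ℕ)
    (hG : G ∈ F) (hU' : ∀ i, U' i ∈ F) (hD : ∀ j, D j ∈ F)
    (hGU : ∀ i, ¬ G ⊆ U' i) (hUG : ∀ i, ¬ U' i ⊆ G)
    (hUU : ∀ i j, i ≠ j → ¬ U' i ⊆ U' j)
    (hDD : ∀ i j, i ≠ j → ¬ D i ⊆ D j)
    (hDG : ∀ j, D j ⊂ G) (hDU : ∀ j i, D j ⊂ U' i) :
    ContainsIndKst s' t F := by
  subst hs'
  refine ⟨Fin.cases G U', D, ?_, hD, ?_, hDD, ?_⟩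
  · intro i
    rcases Fin.eq_zero_or_eq_succ i with rfl | ⟨i', rfl⟩
    · simpa using hG
    · simpa using hU' i'
  · intro i j hij
    rcases Fin.eq_zero_or_eq_succ i with rfl | ⟨i', rfl⟩ <;>
      rcases Fin.eq_zero_or_eq_succ j with rfl | ⟨j', rfl⟩
    · exact absurd rfl hij
    · simpa using hGU j'
    · simpa using hUG i'
    · exact (by simpa using hUU i' j' (fun h => hij (congrArg Fin.succ h)))
  · intro i j
    rcases Fin.eq_zero_or_eq_succ i with rfl | ⟨i', rfl⟩
    · simpa using hDG j
    · simpa using hDU j i'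

lemma contains_of_lower {s k t' : ℕ} {F : Finset (Finset ℕ)} {G : Finset ℕ}
    (ht' : t' = k + 1)
    (U : Fin s → Finset ℕ) (D' : Fin k → Finset ℕ)
    (hU : ∀ i, U i ∈ F) (hG : G ∈ F) (hD' : ∀ j, D' j ∈ F)
    (hUU : ∀ i j, i ≠ j → ¬ U i ⊆ U j)
    (hGD : ∀ j, ¬ G ⊆ D' j) (hDG : ∀ j, ¬ D' j ⊆ G)
    (hDD : ∀ i j, i ≠ j → ¬ D' i ⊆ D' j)
    (hGU : ∀ i, G ⊂ U i) (hDU : ∀ j i, D' j ⊂ U i) :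
    ContainsIndKst s t' F := by
  subst ht'
  refine ⟨U, Fin.cases G D', hU, ?_, hUU, ?_, ?_⟩
  · intro j
    rcases Fin.eq_zero_or_eq_succ j with rfl | ⟨j', rfl⟩
    · simpa using hG
    · simpa using hD' j'
  · intro i j hij
    rcases Fin.eq_zero_or_eq_succ i with rfl | ⟨i', rfl⟩ <;>
      rcases Fin.eq_zero_or_eq_succ j with rfl | ⟨j', rfl⟩
    · exact absurd rfl hij
    · simpa using hGD j'
    · simpa using hDG i'
    · exact (by simpa using hDD i' j' (fun h => hij (congrArg Fin.succ h)))
  · intro i j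
    rcases Fin.eq_zero_or_eq_succ j with rfl | ⟨j', rfl⟩
    · simpa using hGU i
    · simpa using hDU j' i

end Stmt11Aux

namespace Stmt11Aux

open Finset

lemma mem_fam_top (n s t : ℕ) (Ls Lt : Finset ℕ → Finset (Finset ℕ)) :
    Finset.Icc 1 n ∈ lanternFam n s t Ls Lt := by
  simp [lanternFam, lanternF1]

lemma mem_fam_copoint (n s t : ℕ) (Ls Lt : Finset ℕ → Finset (Finset ℕ))
    {x : ℕ} (hx : x ∈ Finset.Icc 1 (s+t-1)) :
    (Finset.Icc 1 n).erase x ∈ lanternFam n s t Ls Lt := by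
  have h : (Finset.Icc 1 n).erase x ∈ lanternF1 n s t := by
    simp only [lanternF1, Finset.mem_insert, Finset.mem_image]
    exact Or.inr ⟨x, hx, rfl⟩
  simp only [lanternFam, Finset.mem_union]; tauto

lemma mem_fam_empty (n s t : ℕ) (Ls Lt : Finset ℕ → Finset (Finset ℕ)) :
    (∅ : Finset ℕ) ∈ lanternFam n s t Ls Lt := by
  have h : (∅ : Finset ℕ) ∈ lanternF4 s t := by simp [lanternF4]
  simp only [lanternFam, Finset.mem_union]; tauto

lemma mem_fam_singleton (n s t : ℕ) (Ls Lt : Finset ℕ → Finset (Finset ℕ))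
    {x : ℕ} (hx : x ∈ Finset.Icc 1 (s+t-1)) :
    ({x} : Finset ℕ) ∈ lanternFam n s t Ls Lt := by
  have h : ({x} : Finset ℕ) ∈ lanternF4 s t := by
    simp only [lanternF4, Finset.mem_insert, Finset.mem_image]
    exact Or.inr ⟨x, hx, rfl⟩
  simp only [lanternFam, Finset.mem_union]; tauto

lemma mem_fam_F2 (n s t : ℕ) (Ls Lt : Finset ℕ → Finset (Finset ℕ))
    {A X : Finset ℕ} (hA : A ∈ Finset.powersetCard t (Finset.Icc 1 (s+t-1)))
    (hX : X ∈ Ls A) : X ∈ lanternFam n s t Ls Lt := by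
  have h : X ∈ lanternF2 s t Ls := Finset.mem_biUnion.2 ⟨A, hA, hX⟩
  simp only [lanternFam, Finset.mem_union]; tauto

lemma mem_fam_F3 (n s t : ℕ) (Ls Lt : Finset ℕ → Finset (Finset ℕ))
    {A X : Finset ℕ} (hA : A ∈ Finset.powersetCard (t-1) (Finset.Icc 1 (s+t-1)))
    (hX : X ∈ Lt (insert (s+t) A)) : X ∈ lanternFam n s t Ls Lt := by
  have h : X ∈ lanternF3 s t Lt := Finset.mem_biUnion.2 ⟨A, hA, hX⟩
  simp only [lanternFam, Finset.mem_union]; tauto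

lemma erase_not_subset {B : Finset ℕ} {x y : ℕ} (hy : y ∈ B) (hxy : x ≠ y) :
    ¬ B.erase x ⊆ B.erase y := by
  intro hsub
  have h1 : y ∈ B.erase x := Finset.mem_erase.2 ⟨fun h => hxy h.symm, hy⟩
  exact (Finset.mem_erase.1 (hsub h1)).1 rfl

lemma not_subset_of_card_lt {X Y : Finset ℕ} (h : Y.card < X.card) : ¬ X ⊆ Y :=
  fun hs => absurd (Finset.card_le_card hs) (by omega)

lemma not_subset_of_card_eq_ne {X Y : Finset ℕ} (h : X.card = Y.card) (hne : X ≠ Y) :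
    ¬ X ⊆ Y := fun hs => hne (Finset.eq_of_subset_of_card_le hs h.ge)

lemma ssubset_of_subset_card_lt {X Y : Finset ℕ} (hs : X ⊆ Y) (h : X.card < Y.card) :
    X ⊂ Y :=
  Finset.ssubset_iff_subset_ne.2 ⟨hs, fun h' => by rw [h'] at h; omega⟩

lemma singleton_ssubset {y : ℕ} {X : Finset ℕ} (hy : y ∈ X) (h : 2 ≤ X.card) :
    ({y} : Finset ℕ) ⊂ X :=
  ssubset_of_subset_card_lt (Finset.singleton_subset_iff.2 hy) (by simp; omega)

lemma card_union_high {s t n : ℕ} {A : Finset ℕ} (hA : A ⊆ Finset.Icc 1 (s+t-1)) :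
    (A ∪ Finset.Icc (s+t+1) n).card = A.card + (Finset.Icc (s+t+1) n).card := by
  rw [Finset.card_union_of_disjoint]
  refine Finset.disjoint_left.2 ?_
  intro v hvA hvI
  have h1 := Finset.mem_Icc.1 (hA hvA)
  have h2 := Finset.mem_Icc.1 hvI
  omega

end Stmt11Aux

open Stmt11Aux in
/-- the completed construction `F = F' ∪ F₅` is induced
`K_{s,t}`-saturated. -/
theorem stmt11
    (n s t : ℕ) (hts : t ≤ s) (ht : 2 ≤ t) (hn : 2*s + t - 1 ≤ n)
    (Ls Lt : Finset ℕ → Finset (Finset ℕ))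
    (hLs : ∀ A ∈ Finset.powersetCard t (Finset.Icc 1 (s+t-1)),
      IsUpperLantern n s t A (Ls A))
    (hLt : ∀ A ∈ Finset.powersetCard (t-1) (Finset.Icc 1 (s+t-1)),
      IsLowerLantern n s t (insert (s+t) A) (Lt (insert (s+t) A)))
    (F5 : Finset (Finset ℕ))
    (hF5sub : F5 ⊆ lanternG1 n s t ∪ lanternG2 s t)
    (hF5free : ¬ ContainsIndKst s t (lanternFam n s t Ls Lt ∪ F5))
    (hF5max : ∀ X ∈ lanternG1 n s t ∪ lanternG2 s t, X ∉ F5 →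
      ContainsIndKst s t (lanternFam n s t Ls Lt ∪ insert X F5))
    : IsIndKstSaturated n s t (lanternFam n s t Ls Lt ∪ F5) := by
  have hs2 : 2 ≤ s := le_trans ht hts
  refine ⟨?_, hF5free, ?_⟩
  · -- every member is inside [1, n]
    intro A hA
    rcases Finset.mem_union.1 hA with hA | hA
    · simp only [lanternFam, Finset.mem_union] at hA
      rcases hA with ((hA | hA) | hA) | hA
      · simp only [lanternF1, Finset.mem_insert, Finset.mem_image] at hA
        rcases hA with rfl | ⟨x, _, rfl⟩
        · exact Finset.Subset.refl _
        · exact Finset.erase_subset _ _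
      · simp only [lanternF2, Finset.mem_biUnion] at hA
        obtain ⟨A0, hA0, hX⟩ := hA
        have hbet := lantern_mem_between (hLs A0 hA0).1 A hX
        refine hbet.2.trans (Finset.union_subset ?_ ?_)
        · exact (Finset.mem_powersetCard.1 hA0).1.trans
            (Finset.Icc_subset_Icc le_rfl (by omega))
        · exact Finset.Icc_subset_Icc (by omega) le_rfl
      · simp only [lanternF3, Finset.mem_biUnion] at hA
        obtain ⟨A0, hA0, hX⟩ := hA
        have hbet := lantern_mem_between (hLt A0 hA0).1 A hX
        refine hbet.2.trans (Finset.union_subset ?_ ?_)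
        · refine Finset.insert_subset (Finset.mem_Icc.2 ⟨by omega, by omega⟩) ?_
          exact (Finset.mem_powersetCard.1 hA0).1.trans
            (Finset.Icc_subset_Icc le_rfl (by omega))
        · exact Finset.Icc_subset_Icc (by omega) le_rfl
      · simp only [lanternF4, Finset.mem_insert, Finset.mem_image] at hA
        rcases hA with rfl | ⟨x, hx, rfl⟩
        · exact Finset.empty_subset _
        · rw [Finset.singleton_subset_iff]
          have := Finset.mem_Icc.1 hx
          exact Finset.mem_Icc.2 ⟨by omega, by omega⟩
    · rcases Finset.mem_union.1 (hF5sub hA) with h | h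
      · simp only [lanternG1, Finset.mem_biUnion, Finset.mem_image] at h
        obtain ⟨i, _, A0, _, rfl⟩ := h
        exact Finset.sdiff_subset
      · simp only [lanternG2, Finset.mem_biUnion] at h
        obtain ⟨i, _, hA2⟩ := h
        exact (Finset.mem_powersetCard.1 hA2).1.trans
          (Finset.Icc_subset_Icc le_rfl (by omega))
  · -- saturation
    intro G hGsub hGF
    by_cases hG12 : G ∈ lanternG1 n s t ∪ lanternG2 s t
    · have hG5 : G ∉ F5 := fun h => hGF (Finset.mem_union_right _ h)
      have hcopy := hF5max G hG12 hG5
      rwa [Finset.union_insert] at hcopy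
    · have hG1 : G ∉ lanternG1 n s t := fun h => hG12 (Finset.mem_union_left _ h)
      have hG2 : G ∉ lanternG2 s t := fun h => hG12 (Finset.mem_union_right _ h)
      have cardS : (Finset.Icc 1 (s+t-1)).card = s + t - 1 := by
        rw [Nat.card_Icc]; omega
      have cardN : (Finset.Icc 1 n).card = n := by rw [Nat.card_Icc]; omega
      have hGne_top : G ≠ Finset.Icc 1 n := fun h =>
        hGF (h ▸ Finset.mem_union_left _ (mem_fam_top n s t Ls Lt))
      have hGne_empty : G ≠ ∅ := fun h =>
        hGF (h ▸ Finset.mem_union_left _ (mem_fam_empty n s t Ls Lt))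
      set a := (G ∩ Finset.Icc 1 (s+t-1)).card with ha
      rcases Nat.lt_or_ge a t with halt | hage
      · -- a ≤ t - 1
        by_cases ha0 : G ∩ Finset.Icc 1 (s+t-1) = ∅
        · -- construction C0
          have hSN : Finset.Icc 1 (s+t-1) ⊆ Finset.Icc 1 n :=
            Finset.Icc_subset_Icc le_rfl (by omega)
          obtain ⟨W, hWS, hWcard⟩ := Finset.exists_subset_card_eq
            (show t-1 ≤ (Finset.Icc 1 (s+t-1)).card by rw [cardS]; omega)
          obtain ⟨x, hxinj, hxmem⟩ := exists_inj_fun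
            (show s ≤ ((Finset.Icc 1 (s+t-1)) \ W).card by
              rw [Finset.card_sdiff_of_subset hWS, cardS, hWcard]; omega)
          obtain ⟨yf, hyinj, hymem⟩ := exists_inj_fun (show t-1 ≤ W.card by omega)
          have hxS : ∀ i, x i ∈ Finset.Icc 1 (s+t-1) :=
            fun i => (Finset.mem_sdiff.1 (hxmem i)).1
          have hxW : ∀ i, x i ∉ W := fun i => (Finset.mem_sdiff.1 (hxmem i)).2
          have hyS : ∀ j, yf j ∈ Finset.Icc 1 (s+t-1) := fun j => hWS (hymem j)
          have hNG : ∀ v ∈ Finset.Icc 1 (s+t-1), v ∉ G := by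
            intro v hv hvG
            have hmm : v ∈ G ∩ Finset.Icc 1 (s+t-1) := Finset.mem_inter.2 ⟨hvG, hv⟩
            rw [ha0] at hmm
            exact Finset.notMem_empty _ hmm
          refine contains_of_lower (by omega : t = (t-1) + 1)
              (fun i => (Finset.Icc 1 n).erase (x i))
              (fun j => {yf j}) ?_ (Finset.mem_insert_self _ _) ?_ ?_ ?_ ?_ ?_ ?_ ?_
          · intro i
            exact Finset.mem_insert_of_mem (Finset.mem_union_left _
              (mem_fam_copoint n s t Ls Lt (hxS i)))
          · intro j
            exact Finset.mem_insert_of_mem (Finset.mem_union_left _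
              (mem_fam_singleton n s t Ls Lt (hyS j)))
          · intro i j hij
            exact erase_not_subset (hSN (hxS j)) (fun h => hij (hxinj h))
          · intro j hsub
            rcases Finset.subset_singleton_iff.1 hsub with h | h
            · exact hGne_empty h
            · exact hNG (yf j) (hyS j) (h ▸ Finset.mem_singleton_self _)
          · intro j hsub
            exact hNG (yf j) (hyS j) (Finset.singleton_subset_iff.1 hsub)
          · intro i j hij hsub
            have h1 := Finset.mem_singleton.1 (hsub (Finset.mem_singleton_self _))
            exact hij (hyinj h1)
          · intro i
            refine Finset.ssubset_iff_subset_ne.2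
              ⟨Finset.subset_erase.2 ⟨hGsub, hNG (x i) (hxS i)⟩, fun h => ?_⟩
            exact hGF (h ▸ Finset.mem_union_left _
              (mem_fam_copoint n s t Ls Lt (hxS i)))
          · intro j i
            have hyne : yf j ≠ x i := fun h => hxW i (h ▸ hymem j)
            refine singleton_ssubset (Finset.mem_erase.2 ⟨hyne, hSN (hyS j)⟩) ?_
            rw [Finset.card_erase_of_mem (hSN (hxS i)), cardN]
            omega
        · by_cases hC2 : a = t - 1 ∧ s + t ∈ G
          · -- construction C2 : lower lantern mid-levels
            have hSN : Finset.Icc 1 (s+t-1) ⊆ Finset.Icc 1 n :=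
              Finset.Icc_subset_Icc le_rfl (by omega)
            have hA'S : G ∩ Finset.Icc 1 (s+t-1) ⊆ Finset.Icc 1 (s+t-1) :=
              Finset.inter_subset_right
            have hA'card : (G ∩ Finset.Icc 1 (s+t-1)).card = t - 1 := by
              rw [← ha]; exact hC2.1
            have hA'pc : G ∩ Finset.Icc 1 (s+t-1) ∈
                Finset.powersetCard (t-1) (Finset.Icc 1 (s+t-1)) :=
              Finset.mem_powersetCard.2 ⟨hA'S, hA'card⟩
            have hlow := hLt _ hA'pc
            have hpA' : s + t ∉ G ∩ Finset.Icc 1 (s+t-1) := fun h => by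
              have := Finset.mem_Icc.1 (hA'S h); omega
            have cardR : (insert (s+t) (G ∩ Finset.Icc 1 (s+t-1))).card = t := by
              rw [Finset.card_insert_of_notMem hpA', hA'card]; omega
            have hRG : insert (s+t) (G ∩ Finset.Icc 1 (s+t-1)) ⊆ G :=
              Finset.insert_subset hC2.2 Finset.inter_subset_left
            have hGB : G ⊆ insert (s+t) (G ∩ Finset.Icc 1 (s+t-1)) ∪
                Finset.Icc (s+t+1) n := by
              intro v hv
              have hv1 := Finset.mem_Icc.1 (hGsub hv)
              rcases Nat.lt_or_ge v (s+t) with h | h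
              · exact Finset.mem_union_left _ (Finset.mem_insert_of_mem
                  (Finset.mem_inter.2 ⟨hv, Finset.mem_Icc.2 ⟨by omega, by omega⟩⟩))
              · rcases Nat.eq_or_lt_of_le h with h' | h'
                · exact Finset.mem_union_left _ (Finset.mem_insert.2 (Or.inl h'.symm))
                · exact Finset.mem_union_right _ (Finset.mem_Icc.2 ⟨by omega, by omega⟩)
            have hends := lantern_mem_ends hlow.1 (by omega : t - 1 ≠ 0)
            have hGneR : G ≠ insert (s+t) (G ∩ Finset.Icc 1 (s+t-1)) := fun h =>
              hGF (h ▸ Finset.mem_union_left _ (mem_fam_F3 n s t Ls Lt hA'pc hends.1))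
            have hGneB : G ≠ insert (s+t) (G ∩ Finset.Icc 1 (s+t-1)) ∪
                Finset.Icc (s+t+1) n := fun h =>
              hGF (h ▸ Finset.mem_union_left _ (mem_fam_F3 n s t Ls Lt hA'pc hends.2))
            have hdisj : Disjoint (insert (s+t) (G ∩ Finset.Icc 1 (s+t-1)))
                (Finset.Icc (s+t+1) n) := by
              refine Finset.disjoint_left.2 ?_
              intro v hv hv2
              have h2 := Finset.mem_Icc.1 hv2
              rcases Finset.mem_insert.1 hv with rfl | hv
              · omega
              · have := Finset.mem_Icc.1 (hA'S hv); omega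
            have cardB : (insert (s+t) (G ∩ Finset.Icc 1 (s+t-1)) ∪
                Finset.Icc (s+t+1) n).card = t + (n - (s+t)) := by
              rw [Finset.card_union_of_disjoint hdisj, cardR, Nat.card_Icc]
              omega
            have hcG1 : t < G.card := by
              have := Finset.card_lt_card (Finset.ssubset_iff_subset_ne.2
                ⟨hRG, fun h => hGneR h.symm⟩)
              omega
            have hcG2 : G.card < t + (n - (s+t)) := by
              have := Finset.card_lt_card (Finset.ssubset_iff_subset_ne.2 ⟨hGB, hGneB⟩)
              omega
            obtain ⟨f, hf, hfinj⟩ := lantern_sizes hlow.1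
              (c := G.card) (by rw [cardR]; omega) (by rw [cardB]; omega)
            have hfinj' := hfinj (by rw [cardR]; omega) (by rw [cardB]; omega)
            have hfB : ∀ j, f j ⊆ insert (s+t) (G ∩ Finset.Icc 1 (s+t-1)) ∪
                Finset.Icc (s+t+1) n :=
              fun j => (lantern_mem_between hlow.1 _ (hf j).1).2
            have hfN : ∀ j, f j ⊆ Finset.Icc 1 n := by
              intro j
              refine (hfB j).trans (Finset.union_subset ?_ ?_)
              · exact Finset.insert_subset (Finset.mem_Icc.2 ⟨by omega, by omega⟩)
                  (Finset.inter_subset_left.trans hGsub)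
              · exact Finset.Icc_subset_Icc (by omega) le_rfl
            have hfG : ∀ j, f j ≠ G := fun j h =>
              hGF (h ▸ Finset.mem_union_left _ (mem_fam_F3 n s t Ls Lt hA'pc (hf j).1))
            obtain ⟨x, hxinj, hxmem⟩ := exists_inj_fun
              (show s ≤ ((Finset.Icc 1 (s+t-1)) \ (G ∩ Finset.Icc 1 (s+t-1))).card by
                rw [Finset.card_sdiff_of_subset hA'S, cardS, hA'card]; omega)
            have hxS : ∀ i, x i ∈ Finset.Icc 1 (s+t-1) :=
              fun i => (Finset.mem_sdiff.1 (hxmem i)).1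
            have hxA' : ∀ i, x i ∉ G ∩ Finset.Icc 1 (s+t-1) :=
              fun i => (Finset.mem_sdiff.1 (hxmem i)).2
            have hxG : ∀ i, x i ∉ G := fun i hxiG =>
              hxA' i (Finset.mem_inter.2 ⟨hxiG, hxS i⟩)
            have hxB : ∀ i, x i ∉ insert (s+t) (G ∩ Finset.Icc 1 (s+t-1)) ∪
                Finset.Icc (s+t+1) n := by
              intro i h
              have hxb := Finset.mem_Icc.1 (hxS i)
              rcases Finset.mem_union.1 h with h | h
              · rcases Finset.mem_insert.1 h with h | h
                · omega
                · exact hxA' i h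
              · have := Finset.mem_Icc.1 h; omega
            refine contains_of_lower (by omega : t = (t-1) + 1)
                (fun i => (Finset.Icc 1 n).erase (x i)) f
                ?_ (Finset.mem_insert_self _ _) ?_ ?_ ?_ ?_ ?_ ?_ ?_
            · intro i
              exact Finset.mem_insert_of_mem (Finset.mem_union_left _
                (mem_fam_copoint n s t Ls Lt (hxS i)))
            · intro j
              exact Finset.mem_insert_of_mem (Finset.mem_union_left _
                (mem_fam_F3 n s t Ls Lt hA'pc (hf j).1))
            · intro i j hij
              exact erase_not_subset (hSN (hxS j)) (fun h => hij (hxinj h))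
            · intro j
              exact not_subset_of_card_eq_ne (by rw [(hf j).2]) (fun h => hfG j h.symm)
            · intro j
              exact not_subset_of_card_eq_ne (by rw [(hf j).2]) (hfG j)
            · intro i j hij
              exact not_subset_of_card_eq_ne (by rw [(hf i).2, (hf j).2])
                (fun h => hij (hfinj' h))
            · intro i
              refine Finset.ssubset_iff_subset_ne.2
                ⟨Finset.subset_erase.2 ⟨hGsub, hxG i⟩, fun h => ?_⟩
              exact hGF (h ▸ Finset.mem_union_left _
                (mem_fam_copoint n s t Ls Lt (hxS i)))
            · intro j i
              have hxf : x i ∉ f j := fun h => hxB i (hfB j h)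
              refine ssubset_of_subset_card_lt
                (Finset.subset_erase.2 ⟨hfN j, hxf⟩) ?_
              rw [(hf j).2, Finset.card_erase_of_mem (hSN (hxS i)), cardN]
              omega
          · -- construction C3 : copoints + second-level lower lantern sets
            have hSN : Finset.Icc 1 (s+t-1) ⊆ Finset.Icc 1 n :=
              Finset.Icc_subset_Icc le_rfl (by omega)
            obtain ⟨A', hGA', hA'S, hA'card⟩ := Finset.exists_subsuperset_card_eq
              Finset.inter_subset_right (show a ≤ t-1 by omega)
              (show t-1 ≤ (Finset.Icc 1 (s+t-1)).card by rw [cardS]; omega)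
            have hA'pc : A' ∈ Finset.powersetCard (t-1) (Finset.Icc 1 (s+t-1)) :=
              Finset.mem_powersetCard.2 ⟨hA'S, hA'card⟩
            have hlow := hLt A' hA'pc
            have hpA' : s + t ∉ A' := fun h => by
              have := Finset.mem_Icc.1 (hA'S h); omega
            have cardR : (insert (s+t) A').card = t := by
              rw [Finset.card_insert_of_notMem hpA', hA'card]; omega
            obtain ⟨z, hzinj, hzmem⟩ := exists_inj_fun
              (show t-1 ≤ (Finset.Icc (s+t+1) (s+2*t-1)).card by rw [Nat.card_Icc]; omega)
            obtain ⟨x, hxinj, hxmem⟩ := exists_inj_fun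
              (show s ≤ ((Finset.Icc 1 (s+t-1)) \ A').card by
                rw [Finset.card_sdiff_of_subset hA'S, cardS, hA'card]; omega)
            have hxS : ∀ i, x i ∈ Finset.Icc 1 (s+t-1) :=
              fun i => (Finset.mem_sdiff.1 (hxmem i)).1
            have hxA' : ∀ i, x i ∉ A' := fun i => (Finset.mem_sdiff.1 (hxmem i)).2
            have hxG : ∀ i, x i ∉ G := by
              intro i hxiG
              exact hxA' i (hGA' (Finset.mem_inter.2 ⟨hxiG, hxS i⟩))
            have hzI : ∀ j, s+t+1 ≤ z j ∧ z j ≤ s+2*t-1 :=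
              fun j => Finset.mem_Icc.1 (hzmem j)
            have hQmem : ∀ j, insert (z j) (insert (s+t) A') ∈ Lt (insert (s+t) A') := by
              intro j
              refine (lantern_second hlow.1 ?_).1
              rw [hlow.2]
              exact hzmem j
            have hzR : ∀ j, z j ∉ insert (s+t) A' := by
              intro j h
              rcases Finset.mem_insert.1 h with h | h
              · have := hzI j; omega
              · have := Finset.mem_Icc.1 (hA'S h); have := hzI j; omega
            have cardQ : ∀ j, (insert (z j) (insert (s+t) A')).card = t + 1 := by
              intro j
              rw [Finset.card_insert_of_notMem (hzR j), cardR]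
            have hQsubN : ∀ j, insert (z j) (insert (s+t) A') ⊆ Finset.Icc 1 n := by
              intro j v hv
              rcases Finset.mem_insert.1 hv with rfl | hv
              · exact Finset.mem_Icc.2 ⟨by have := hzI j; omega, by have := hzI j; omega⟩
              · rcases Finset.mem_insert.1 hv with rfl | hv
                · exact Finset.mem_Icc.2 ⟨by omega, by omega⟩
                · exact hSN (hA'S hv)
            refine contains_of_lower (by omega : t = (t-1) + 1)
                (fun i => (Finset.Icc 1 n).erase (x i))
                (fun j => insert (z j) (insert (s+t) A'))
                ?_ (Finset.mem_insert_self _ _) ?_ ?_ ?_ ?_ ?_ ?_ ?_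
            · intro i
              exact Finset.mem_insert_of_mem (Finset.mem_union_left _
                (mem_fam_copoint n s t Ls Lt (hxS i)))
            · intro j
              exact Finset.mem_insert_of_mem (Finset.mem_union_left _
                (mem_fam_F3 n s t Ls Lt hA'pc (hQmem j)))
            · intro i j hij
              exact erase_not_subset (hSN (hxS j)) (fun h => hij (hxinj h))
            · -- ¬ G ⊆ Q j
              intro j hsub
              have hGsub2 : G ⊆ Finset.Icc 1 (s+2*t-1) := by
                intro v hv
                have hv1 := Finset.mem_Icc.1 (hGsub hv)
                have hvQ := hsub hv
                rcases Finset.mem_insert.1 hvQ with rfl | hvQ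
                · exact Finset.mem_Icc.2 ⟨by omega, by have := hzI j; omega⟩
                · rcases Finset.mem_insert.1 hvQ with rfl | hvQ
                  · exact Finset.mem_Icc.2 ⟨by omega, by omega⟩
                  · have := Finset.mem_Icc.1 (hA'S hvQ)
                    exact Finset.mem_Icc.2 ⟨by omega, by omega⟩
              have hGcard : G.card ≤ t + 1 := by
                have := Finset.card_le_card hsub
                rw [cardQ j] at this
                exact this
              obtain ⟨g, hg⟩ := Finset.nonempty_iff_ne_empty.2 ha0
              have hgG := (Finset.mem_inter.1 hg).1
              have hgS := (Finset.mem_inter.1 hg).2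
              rcases Nat.lt_or_ge G.card 2 with hc1 | hc2
              · -- G is a singleton {g} with g ∈ S : already in the family
                have hc1' : G.card = 1 := by
                  rcases Nat.eq_zero_or_pos G.card with h0 | h0
                  · exact absurd (Finset.card_eq_zero.1 h0) hGne_empty
                  · omega
                obtain ⟨w, hw⟩ := Finset.card_eq_one.1 hc1'
                have : g = w := by
                  have := hw ▸ hgG
                  exact Finset.mem_singleton.1 this
                apply hGF
                rw [hw, ← this]
                exact Finset.mem_union_left _ (mem_fam_singleton n s t Ls Lt hgS)
              · rcases Nat.lt_or_ge G.card (t+1) with hct | hct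
                · -- G ∈ G2, contradiction
                  apply hG2
                  simp only [lanternG2, Finset.mem_biUnion]
                  exact ⟨G.card, Finset.mem_Icc.2 ⟨hc2, by omega⟩,
                    Finset.mem_powersetCard.2 ⟨hGsub2, rfl⟩⟩
                · -- G = Q j, contradiction
                  have hEq : G = insert (z j) (insert (s+t) A') :=
                    Finset.eq_of_subset_of_card_le hsub (by rw [cardQ j]; omega)
                  apply hGF
                  rw [hEq]
                  exact Finset.mem_union_left _ (mem_fam_F3 n s t Ls Lt hA'pc (hQmem j))
            · -- ¬ Q j ⊆ G
              intro j hsub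
              have hpG : s + t ∈ G :=
                hsub (Finset.mem_insert_of_mem (Finset.mem_insert_self _ _))
              have hA'G2 : A' ⊆ G ∩ Finset.Icc 1 (s+t-1) := by
                intro v hv
                exact Finset.mem_inter.2
                  ⟨hsub (Finset.mem_insert_of_mem (Finset.mem_insert_of_mem hv)), hA'S hv⟩
              have : t - 1 ≤ a := by
                rw [ha]
                exact hA'card ▸ Finset.card_le_card hA'G2
              exact hC2 ⟨by omega, hpG⟩
            · -- Q pairwise incomparable
              intro i j hij hsub
              have h1 : z i ∈ insert (z j) (insert (s+t) A') :=
                hsub (Finset.mem_insert_self _ _)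
              rcases Finset.mem_insert.1 h1 with h | h
              · exact hij (hzinj h)
              · exact hzR i h
            · -- G ⊂ copoint
              intro i
              refine Finset.ssubset_iff_subset_ne.2
                ⟨Finset.subset_erase.2 ⟨hGsub, hxG i⟩, fun h => ?_⟩
              exact hGF (h ▸ Finset.mem_union_left _
                (mem_fam_copoint n s t Ls Lt (hxS i)))
            · -- Q j ⊂ copoint
              intro j i
              have hxQ : x i ∉ insert (z j) (insert (s+t) A') := by
                intro h
                have hxb := Finset.mem_Icc.1 (hxS i)
                rcases Finset.mem_insert.1 h with h | h
                · have := hzI j; omega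
                · rcases Finset.mem_insert.1 h with h | h
                  · omega
                  · exact hxA' i h
              refine ssubset_of_subset_card_lt
                (Finset.subset_erase.2 ⟨hQsubN j, hxQ⟩) ?_
              rw [cardQ j, Finset.card_erase_of_mem (hSN (hxS i)), cardN]
              omega
      · -- a ≥ t
        by_cases hC1 : a = t ∧ s + t ∉ G
        · -- construction C1 : upper lantern mid-levels
          have hSN : Finset.Icc 1 (s+t-1) ⊆ Finset.Icc 1 n :=
            Finset.Icc_subset_Icc le_rfl (by omega)
          have hAS : G ∩ Finset.Icc 1 (s+t-1) ⊆ Finset.Icc 1 (s+t-1) :=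
            Finset.inter_subset_right
          have hAcard : (G ∩ Finset.Icc 1 (s+t-1)).card = t := by
            rw [← ha]; exact hC1.1
          have hApc : G ∩ Finset.Icc 1 (s+t-1) ∈
              Finset.powersetCard t (Finset.Icc 1 (s+t-1)) :=
            Finset.mem_powersetCard.2 ⟨hAS, hAcard⟩
          have hup := hLs _ hApc
          have hAG : G ∩ Finset.Icc 1 (s+t-1) ⊆ G := Finset.inter_subset_left
          have hGB : G ⊆ (G ∩ Finset.Icc 1 (s+t-1)) ∪ Finset.Icc (s+t+1) n := by
            intro v hv
            have hv1 := Finset.mem_Icc.1 (hGsub hv)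
            rcases Nat.lt_or_ge v (s+t) with h | h
            · exact Finset.mem_union_left _
                (Finset.mem_inter.2 ⟨hv, Finset.mem_Icc.2 ⟨by omega, by omega⟩⟩)
            · rcases Nat.eq_or_lt_of_le h with h' | h'
              · exact absurd (h' ▸ hv) hC1.2
              · exact Finset.mem_union_right _ (Finset.mem_Icc.2 ⟨by omega, by omega⟩)
          have hends := lantern_mem_ends hup.1 (by omega : s - 1 ≠ 0)
          have hGneA : G ≠ G ∩ Finset.Icc 1 (s+t-1) := fun h =>
            hGF (h ▸ Finset.mem_union_left _ (mem_fam_F2 n s t Ls Lt hApc hends.1))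
          have hGneB : G ≠ (G ∩ Finset.Icc 1 (s+t-1)) ∪ Finset.Icc (s+t+1) n := fun h =>
            hGF (h ▸ Finset.mem_union_left _ (mem_fam_F2 n s t Ls Lt hApc hends.2))
          have cardB : ((G ∩ Finset.Icc 1 (s+t-1)) ∪ Finset.Icc (s+t+1) n).card
              = t + (n - (s+t)) := by
            rw [card_union_high hAS, hAcard, Nat.card_Icc]
            omega
          have hcG1 : t < G.card := by
            have := Finset.card_lt_card (Finset.ssubset_iff_subset_ne.2
              ⟨hAG, fun h => hGneA h.symm⟩)
            omega
          have hcG2 : G.card < t + (n - (s+t)) := by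
            have := Finset.card_lt_card (Finset.ssubset_iff_subset_ne.2 ⟨hGB, hGneB⟩)
            omega
          obtain ⟨f, hf, hfinj⟩ := lantern_sizes hup.1
            (c := G.card) (by rw [hAcard]; omega) (by rw [cardB]; omega)
          have hfinj' := hfinj (by rw [hAcard]; omega) (by rw [cardB]; omega)
          have hfA : ∀ i, G ∩ Finset.Icc 1 (s+t-1) ⊆ f i :=
            fun i => (lantern_mem_between hup.1 _ (hf i).1).1
          have hfG : ∀ i, f i ≠ G := fun i h =>
            hGF (h ▸ Finset.mem_union_left _ (mem_fam_F2 n s t Ls Lt hApc (hf i).1))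
          obtain ⟨yf, hyinj, hymem⟩ := exists_inj_fun
            (show t ≤ (G ∩ Finset.Icc 1 (s+t-1)).card by omega)
          refine contains_of_upper (by omega : s = (s-1) + 1) f (fun j => {yf j})
              (Finset.mem_insert_self _ _) ?_ ?_ ?_ ?_ ?_ ?_ ?_ ?_
          · intro i
            exact Finset.mem_insert_of_mem (Finset.mem_union_left _
              (mem_fam_F2 n s t Ls Lt hApc (hf i).1))
          · intro j
            exact Finset.mem_insert_of_mem (Finset.mem_union_left _
              (mem_fam_singleton n s t Ls Lt (hAS (hymem j))))
          · intro i
            exact not_subset_of_card_eq_ne (by rw [(hf i).2]) (fun h => hfG i h.symm)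
          · intro i
            exact not_subset_of_card_eq_ne (by rw [(hf i).2]) (hfG i)
          · intro i j hij
            exact not_subset_of_card_eq_ne (by rw [(hf i).2, (hf j).2])
              (fun h => hij (hfinj' h))
          · intro i j hij hsub
            have h1 := Finset.mem_singleton.1 (hsub (Finset.mem_singleton_self _))
            exact hij (hyinj h1)
          · intro j
            exact singleton_ssubset (hAG (hymem j)) (by omega)
          · intro j i
            exact singleton_ssubset (hfA i (hymem j)) (by rw [(hf i).2]; omega)
        · have h5 : s + t ∈ G ∨ t + 1 ≤ a := by
            rcases Nat.lt_or_ge t a with h | h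
            · exact Or.inr h
            · by_cases hp : s + t ∈ G
              · exact Or.inl hp
              · exact absurd ⟨le_antisymm h hage, hp⟩ hC1
          by_cases h5a : ∀ y ∈ Finset.Icc (s+t+1) (2*s+t-1),
              ∃ w, w ∈ Finset.Icc (s+t+1) n ∧ w ∉ G ∧ w ≠ y
          · -- construction C5a : G + penultimate upper lantern sets
            have hSN : Finset.Icc 1 (s+t-1) ⊆ Finset.Icc 1 n :=
              Finset.Icc_subset_Icc le_rfl (by omega)
            obtain ⟨A, hAGS, hAcard⟩ := Finset.exists_subset_card_eq
              (show t ≤ (G ∩ Finset.Icc 1 (s+t-1)).card by omega)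
            have hAS : A ⊆ Finset.Icc 1 (s+t-1) :=
              hAGS.trans Finset.inter_subset_right
            have hAG : A ⊆ G := hAGS.trans Finset.inter_subset_left
            have hApc : A ∈ Finset.powersetCard t (Finset.Icc 1 (s+t-1)) :=
              Finset.mem_powersetCard.2 ⟨hAS, hAcard⟩
            have hup := hLs _ hApc
            obtain ⟨y, hyinj, hymem⟩ := exists_inj_fun
              (show s-1 ≤ (Finset.Icc (s+t+1) (2*s+t-1)).card by rw [Nat.card_Icc]; omega)
            have hyI : ∀ i, s+t+1 ≤ y i ∧ y i ≤ 2*s+t-1 :=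
              fun i => Finset.mem_Icc.1 (hymem i)
            have hyB : ∀ i, y i ∈ A ∪ Finset.Icc (s+t+1) n := fun i =>
              Finset.mem_union_right _ (Finset.mem_Icc.2 ⟨(hyI i).1, by have := hyI i; omega⟩)
            have hPmem : ∀ i, (A ∪ Finset.Icc (s+t+1) n).erase (y i) ∈ Ls A := by
              intro i
              refine (lantern_penult hup.1 ?_).1
              rw [hup.2]
              exact hymem i
            have cardB : (A ∪ Finset.Icc (s+t+1) n).card = t + (n - (s+t)) := by
              rw [card_union_high hAS, hAcard, Nat.card_Icc]
              omega
            have hBN : A ∪ Finset.Icc (s+t+1) n ⊆ Finset.Icc 1 n :=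
              Finset.union_subset (hAS.trans hSN) (Finset.Icc_subset_Icc (by omega) le_rfl)
            have hacard : a ≤ G.card := by
              rw [ha]
              exact Finset.card_le_card Finset.inter_subset_left
            obtain ⟨zf, hzinj, hzmem⟩ := exists_inj_fun (show t ≤ A.card by omega)
            have hzS : ∀ j, zf j ∈ Finset.Icc 1 (s+t-1) := fun j => hAS (hzmem j)
            refine contains_of_upper (by omega : s = (s-1) + 1)
                (fun i => (A ∪ Finset.Icc (s+t+1) n).erase (y i)) (fun j => {zf j})
                (Finset.mem_insert_self _ _) ?_ ?_ ?_ ?_ ?_ ?_ ?_ ?_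
            · intro i
              exact Finset.mem_insert_of_mem (Finset.mem_union_left _
                (mem_fam_F2 n s t Ls Lt hApc (hPmem i)))
            · intro j
              exact Finset.mem_insert_of_mem (Finset.mem_union_left _
                (mem_fam_singleton n s t Ls Lt (hzS j)))
            · -- ¬ G ⊆ P i
              intro i hsub
              rcases h5 with hp | ha1
              · have h1 := Finset.mem_of_mem_erase (hsub hp)
                rcases Finset.mem_union.1 h1 with h | h
                · have := Finset.mem_Icc.1 (hAS h); omega
                · have := Finset.mem_Icc.1 h; omega
              · have hne : ((G ∩ Finset.Icc 1 (s+t-1)) \ A).Nonempty := by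
                  rw [← Finset.card_pos, Finset.card_sdiff_of_subset hAGS, hAcard, ← ha]
                  omega
                obtain ⟨v, hv⟩ := hne
                have hvGS := (Finset.mem_sdiff.1 hv).1
                have hvA := (Finset.mem_sdiff.1 hv).2
                have hvG := (Finset.mem_inter.1 hvGS).1
                have hvS := Finset.mem_Icc.1 (Finset.mem_inter.1 hvGS).2
                have h1 := Finset.mem_of_mem_erase (hsub hvG)
                rcases Finset.mem_union.1 h1 with h | h
                · exact hvA h
                · have := Finset.mem_Icc.1 h; omega
            · -- ¬ P i ⊆ G
              intro i hsub
              obtain ⟨w, hwI, hwG, hwy⟩ := h5a (y i) (hymem i)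
              have hwB : w ∈ A ∪ Finset.Icc (s+t+1) n := Finset.mem_union_right _ hwI
              exact hwG (hsub (Finset.mem_erase.2 ⟨hwy, hwB⟩))
            · intro i j hij
              exact erase_not_subset (hyB j) (fun h => hij (hyinj h))
            · intro i j hij hsub
              have h1 := Finset.mem_singleton.1 (hsub (Finset.mem_singleton_self _))
              exact hij (hzinj h1)
            · intro j
              exact singleton_ssubset (hAG (hzmem j)) (by omega)
            · intro j i
              have hzy : zf j ≠ y i := by
                have h1 := Finset.mem_Icc.1 (hzS j)
                have h2 := hyI i
                omega
              refine singleton_ssubset (Finset.mem_erase.2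
                ⟨hzy, Finset.mem_union_left _ (hzmem j)⟩) ?_
              rw [Finset.card_erase_of_mem (hyB i), cardB]
              omega
          · -- near-top analysis
            push_neg at h5a
            obtain ⟨y, hyI, hyy⟩ := h5a
            set K := Finset.Icc 1 n \ G with hK
            have hKsub : K ⊆ Finset.Icc 1 (2*s+t-1) := by
              intro v hv
              rw [hK, Finset.mem_sdiff] at hv
              obtain ⟨hv1, hv2⟩ := hv
              have hv1' := Finset.mem_Icc.1 hv1
              rcases Nat.lt_or_ge v (s+t+1) with h | h
              · exact Finset.mem_Icc.2 ⟨by omega, by omega⟩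
              · have := hyy v (Finset.mem_Icc.2 ⟨h, hv1'.2⟩) hv2
                have := Finset.mem_Icc.1 hyI
                exact Finset.mem_Icc.2 ⟨by omega, by omega⟩
            have hGK : G = Finset.Icc 1 n \ K := by
              rw [hK, Finset.sdiff_sdiff_self_left, Finset.inter_eq_right.2 hGsub]
            have hcardSG : (Finset.Icc 1 (s+t-1) \ G).card + a = s + t - 1 := by
              have h0 := Finset.card_sdiff_add_card_inter (Finset.Icc 1 (s+t-1)) G
              rw [Finset.inter_comm, cardS] at h0
              omega
            have hKcard : K.card ≤ s := by
              have hsub2 : K ⊆ (Finset.Icc 1 (s+t-1) \ G) ∪ insert (s+t) {y} := by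
                intro v hv
                rw [hK, Finset.mem_sdiff] at hv
                obtain ⟨hv1, hv2⟩ := hv
                have hv1' := Finset.mem_Icc.1 hv1
                simp only [Finset.mem_union, Finset.mem_sdiff, Finset.mem_insert,
                  Finset.mem_singleton]
                rcases Nat.lt_or_ge v (s+t) with h | h
                · exact Or.inl ⟨Finset.mem_Icc.2 ⟨by omega, by omega⟩, hv2⟩
                · rcases Nat.eq_or_lt_of_le h with h' | h'
                  · exact Or.inr (Or.inl h'.symm)
                  · exact Or.inr (Or.inr (hyy v (Finset.mem_Icc.2 ⟨by omega, hv1'.2⟩) hv2))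
              have hins2 : (insert (s+t) ({y} : Finset ℕ)).card ≤ 2 :=
                le_trans (Finset.card_insert_le _ _) (by simp)
              rcases h5 with hp | ha1
              · have hsub3 : K ⊆ (Finset.Icc 1 (s+t-1) \ G) ∪ {y} := by
                  intro v hv
                  have h2 := hsub2 hv
                  simp only [Finset.mem_union, Finset.mem_insert, Finset.mem_singleton]
                    at h2 ⊢
                  rcases h2 with h | h | h
                  · exact Or.inl h
                  · exfalso
                    rw [hK, Finset.mem_sdiff] at hv
                    exact hv.2 (by rw [h]; exact hp)
                  · exact Or.inr h
                have h3 := Finset.card_le_card hsub3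
                have h4 := Finset.card_union_le (Finset.Icc 1 (s+t-1) \ G) ({y} : Finset ℕ)
                simp only [Finset.card_singleton] at h4
                omega
              · have h3 := Finset.card_le_card hsub2
                have h4 := Finset.card_union_le (Finset.Icc 1 (s+t-1) \ G)
                  (insert (s+t) ({y} : Finset ℕ))
                omega
            rcases Nat.lt_or_ge K.card 2 with hK2 | hK2
            · -- K has ≤ 1 element
              interval_cases h : K.card
              · have : K = ∅ := Finset.card_eq_zero.1 h
                rw [this, Finset.sdiff_empty] at hGK
                exact absurd hGK hGne_top
              · obtain ⟨v, hv⟩ := Finset.card_eq_one.1 h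
                have hvN : v ∈ Finset.Icc 1 n := by
                  have : v ∈ K := hv ▸ Finset.mem_singleton_self v
                  exact (Finset.mem_sdiff.1 (hK ▸ this)).1
                have hGe : G = (Finset.Icc 1 n).erase v := by
                  rw [hGK, hv, ← Finset.erase_eq]
                have hvS : v ∉ Finset.Icc 1 (s+t-1) := by
                  intro hvS
                  exact hGF (hGe ▸ Finset.mem_union_left _
                    (mem_fam_copoint n s t Ls Lt hvS))
                -- construction C5b1
                have hSN : Finset.Icc 1 (s+t-1) ⊆ Finset.Icc 1 n :=
                  Finset.Icc_subset_Icc le_rfl (by omega)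
                obtain ⟨X, hXS, hXcard⟩ := Finset.exists_subset_card_eq
                  (show s-1 ≤ (Finset.Icc 1 (s+t-1)).card by rw [cardS]; omega)
                obtain ⟨x, hxinj, hxmem⟩ := exists_inj_fun (show s-1 ≤ X.card by omega)
                obtain ⟨yf, hyinj, hymem⟩ := exists_inj_fun
                  (show t ≤ ((Finset.Icc 1 (s+t-1)) \ X).card by
                    rw [Finset.card_sdiff_of_subset hXS, cardS, hXcard]; omega)
                have hxS : ∀ i, x i ∈ Finset.Icc 1 (s+t-1) := fun i => hXS (hxmem i)
                have hyS : ∀ j, yf j ∈ Finset.Icc 1 (s+t-1) :=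
                  fun j => (Finset.mem_sdiff.1 (hymem j)).1
                have hyX : ∀ j, yf j ∉ X := fun j => (Finset.mem_sdiff.1 (hymem j)).2
                have hxv : ∀ i, x i ≠ v := fun i h => hvS (h ▸ hxS i)
                have hyv : ∀ j, yf j ≠ v := fun j h => hvS (h ▸ hyS j)
                have hxG : ∀ i, x i ∈ G := by
                  intro i
                  rw [hGe]
                  exact Finset.mem_erase.2 ⟨hxv i, hSN (hxS i)⟩
                have hyG : ∀ j, yf j ∈ G := by
                  intro j
                  rw [hGe]
                  exact Finset.mem_erase.2 ⟨hyv j, hSN (hyS j)⟩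
                have cardG : G.card = n - 1 := by
                  rw [hGe, Finset.card_erase_of_mem hvN, cardN]
                refine contains_of_upper (by omega : s = (s-1) + 1)
                    (fun i => (Finset.Icc 1 n).erase (x i)) (fun j => {yf j})
                    (Finset.mem_insert_self _ _) ?_ ?_ ?_ ?_ ?_ ?_ ?_ ?_
                · intro i
                  exact Finset.mem_insert_of_mem (Finset.mem_union_left _
                    (mem_fam_copoint n s t Ls Lt (hxS i)))
                · intro j
                  exact Finset.mem_insert_of_mem (Finset.mem_union_left _
                    (mem_fam_singleton n s t Ls Lt (hyS j)))
                · intro i hsub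
                  exact (Finset.mem_erase.1 (hsub (hxG i))).1 rfl
                · intro i
                  rw [hGe]
                  exact erase_not_subset hvN (hxv i)
                · intro i j hij
                  exact erase_not_subset (hSN (hxS j)) (fun h => hij (hxinj h))
                · intro i j hij hsub
                  have h1 := Finset.mem_singleton.1 (hsub (Finset.mem_singleton_self _))
                  exact hij (hyinj h1)
                · intro j
                  exact singleton_ssubset (hyG j) (by omega)
                · intro j i
                  have hyne : yf j ≠ x i := fun h => hyX j (h ▸ hxmem i)
                  refine singleton_ssubset (Finset.mem_erase.2 ⟨hyne, hSN (hyS j)⟩) ?_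
                  rw [Finset.card_erase_of_mem (hSN (hxS i)), cardN]
                  omega
            · -- G ∈ G1, contradiction
              exfalso
              apply hG1
              simp only [lanternG1, Finset.mem_biUnion, Finset.mem_image]
              refine ⟨K.card, Finset.mem_Icc.2 ⟨hK2, hKcard⟩, K,
                Finset.mem_powersetCard.2 ⟨hKsub, rfl⟩, hGK.symm⟩
end

section
/- Let P be a finite poset with legs a, b, let F ⊆ 2^[n] be an induced P-saturated family, and let x ∈ [n] with {x} ∉ F. If C_x is a partner of x of maximum cardinality among all partners of x, then C_x ∪ {x} ∈ F and C_x ∪ {x} ≠ ∅. -/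
open Finset

/-- A family of finite sets contains an induced copy of the poset `P`. -/
def ContainsIndCopy (P : Type*) [PartialOrder P] (F : Finset (Finset ℕ)) : Prop :=
  ∃ f : P → Finset ℕ, Function.Injective f ∧ (∀ p, f p ∈ F) ∧
    ∀ p q : P, p ≤ q ↔ f p ⊆ f q

/-- `F ⊆ 2^[n]` is induced `P`-saturated. -/
def IsIndPSaturated (n : ℕ) (P : Type*) [PartialOrder P] (F : Finset (Finset ℕ)) : Prop :=
  (∀ A ∈ F, A ⊆ Finset.Icc 1 n) ∧
  ¬ ContainsIndCopy P F ∧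
  ∀ G ⊆ Finset.Icc 1 n, G ∉ F → ContainsIndCopy P (insert G F)

/-- `sat*(n, P)`: minimum size of an induced `P`-saturated family in `2^[n]`. -/
noncomputable def satStarP (n : ℕ) (P : Type*) [PartialOrder P] : ℕ :=
  sInf {m | ∃ F : Finset (Finset ℕ), IsIndPSaturated n P F ∧ F.card = m}

/-- `a` and `b` are legs of `P`: incomparable, and each strictly smaller than
every element of `P \ {a, b}`. -/
def IsLegs (P : Type*) [PartialOrder P] (a b : P) : Prop :=
  ¬ a ≤ b ∧ ¬ b ≤ a ∧ ∀ c : P, c ≠ a → c ≠ b → a < c ∧ b < c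

/-- `C ∈ F` is a partner of `x`: `{x}` and `C` form the legs of some induced
copy of `P` in `F ∪ {{x}}`. -/
def IsPartner (P : Type*) [PartialOrder P] (a b : P) (F : Finset (Finset ℕ))
    (x : ℕ) (C : Finset ℕ) : Prop :=
  C ∈ F ∧ ∃ f : P → Finset ℕ, Function.Injective f ∧
    (∀ p, f p ∈ insert ({x} : Finset ℕ) F) ∧
    (∀ p q : P, p ≤ q ↔ f p ⊆ f q) ∧
    ({f a, f b} : Set (Finset ℕ)) = {({x} : Finset ℕ), C}

lemma partner_symm {P : Type*} [PartialOrder P] {a b : P} {F : Finset (Finset ℕ)}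
    {x : ℕ} {C : Finset ℕ} (h : IsPartner P a b F x C) : IsPartner P b a F x C := by
  obtain ⟨hC, f, h1, h2, h3, h4⟩ := h
  exact ⟨hC, f, h1, h2, h3, by rw [Set.pair_comm (f b) (f a)]; exact h4⟩

lemma legs_symm {P : Type*} [PartialOrder P] {a b : P} (h : IsLegs P a b) : IsLegs P b a :=
  ⟨h.2.1, h.1, fun c h1 h2 => (h.2.2 c h2 h1).symm⟩

/-- Key case analysis: if a copy of `P` in `F ∪ {Cx ∪ {x}}` uses `Cx ∪ {x}` as
the leg `a`, we reach a contradiction. -/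
lemma leg_case {P : Type*} [PartialOrder P] (a b : P) (hlegs : IsLegs P a b)
    (F : Finset (Finset ℕ)) (hnocopy : ¬ ContainsIndCopy P F)
    (x : ℕ) (hxF : ({x} : Finset ℕ) ∉ F)
    (Cx : Finset ℕ) (hCxF : Cx ∈ F) (hxCx : x ∉ Cx) (hCne : ¬ Cx ⊆ ({x} : Finset ℕ))
    (hmax : ∀ C : Finset ℕ, IsPartner P a b F x C → C.card ≤ Cx.card)
    (f : P → Finset ℕ) (finj : Function.Injective f)
    (fiff : ∀ p q : P, p ≤ q ↔ f p ⊆ f q)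
    (hfa : f a = insert x Cx)
    (fF : ∀ p, p ≠ a → f p ∈ F) : False := by
  obtain ⟨hab, hba, hc⟩ := hlegs
  have hbna : b ≠ a := fun h => hab h.symm.le
  have hfab : ¬ f a ⊆ f b := fun h => hab ((fiff a b).2 h)
  have hfba : ¬ f b ⊆ f a := fun h => hba ((fiff b a).2 h)
  have fbF : f b ∈ F := fF b hbna
  have hxfa : x ∈ f a := by rw [hfa]; exact mem_insert_self x Cx
  have hCfa : Cx ⊆ f a := by rw [hfa]; exact subset_insert x Cx
  by_cases hsub : Cx ⊆ f b
  · -- `f b` is a partner of `x`, so `f b = Cx` by maximality: contradiction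
    have hxfb : x ∉ f b := fun hxb => hfab (by rw [hfa]; exact insert_subset hxb hsub)
    obtain ⟨h, hha, hother⟩ :
        ∃ h : P → Finset ℕ, h a = {x} ∧ ∀ p, p ≠ a → h p = f p :=
      by classical exact ⟨fun c => if c = a then {x} else f c, by simp, fun p hp => by simp [hp]⟩
    have hiff : ∀ p q : P, p ≤ q ↔ h p ⊆ h q := by
      intro p q
      by_cases hp : p = a <;> by_cases hq : q = a
      · rw [hp, hq]; simp
      · rw [hp, hha, hother q hq]
        by_cases hqb : q = b
        · rw [hqb]
          exact ⟨fun hle => absurd hle hab,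
                 fun hss => absurd (singleton_subset_iff.1 hss) hxfb⟩
        · exact ⟨fun _ => singleton_subset_iff.2 ((fiff a q).1 (hc q hq hqb).1.le hxfa),
                 fun _ => (hc q hq hqb).1.le⟩
      · rw [hq, hother p hp, hha]
        constructor
        · intro hle
          by_cases hpb : p = b
          · rw [hpb] at hle; exact absurd hle hba
          · exact absurd hle (hc p hp hpb).1.not_ge
        · intro hss
          by_cases hpb : p = b
          · rw [hpb] at hss
            exact absurd (hss.trans (singleton_subset_iff.2 hxfa)) hfba
          · exact absurd ((hCfa.trans ((fiff a p).1 (hc p hp hpb).1.le)).trans hss) hCne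
      · rw [hother p hp, hother q hq]; exact fiff p q
    have hinj : Function.Injective h := fun p q hpq =>
      le_antisymm ((hiff p q).2 (by rw [hpq])) ((hiff q p).2 (by rw [hpq]))
    have hmem : ∀ p, h p ∈ insert ({x} : Finset ℕ) F := by
      intro p
      by_cases hp : p = a
      · rw [hp, hha]; exact mem_insert_self _ _
      · rw [hother p hp]; exact mem_insert_of_mem (fF p hp)
    have hpart : IsPartner P a b F x (f b) :=
      ⟨fbF, h, hinj, hmem, hiff, by rw [hha, hother b hbna]⟩
    have heq : Cx = f b := eq_of_subset_of_card_le hsub (hmax (f b) hpart)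
    exact hfba (heq ▸ hCfa)
  · -- legs `Cx, f b` with the top of `f` give a copy of `P` inside `F`
    obtain ⟨h, hha, hother⟩ :
        ∃ h : P → Finset ℕ, h a = Cx ∧ ∀ p, p ≠ a → h p = f p :=
      by classical exact ⟨fun c => if c = a then Cx else f c, by simp, fun p hp => by simp [hp]⟩
    have hiff : ∀ p q : P, p ≤ q ↔ h p ⊆ h q := by
      intro p q
      by_cases hp : p = a <;> by_cases hq : q = a
      · rw [hp, hq]; simp
      · rw [hp, hha, hother q hq]
        by_cases hqb : q = b
        · rw [hqb]
          exact ⟨fun hle => absurd hle hab, fun hss => absurd hss hsub⟩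
        · exact ⟨fun _ => hCfa.trans ((fiff a q).1 (hc q hq hqb).1.le),
                 fun _ => (hc q hq hqb).1.le⟩
      · rw [hq, hother p hp, hha]
        constructor
        · intro hle
          by_cases hpb : p = b
          · rw [hpb] at hle; exact absurd hle hba
          · exact absurd hle (hc p hp hpb).1.not_ge
        · intro hss
          by_cases hpb : p = b
          · rw [hpb] at hss; exact absurd (hss.trans hCfa) hfba
          · exact absurd (hss ((fiff a p).1 (hc p hp hpb).1.le hxfa)) hxCx
      · rw [hother p hp, hother q hq]; exact fiff p q
    have hinj : Function.Injective h := fun p q hpq =>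
      le_antisymm ((hiff p q).2 (by rw [hpq])) ((hiff q p).2 (by rw [hpq]))
    refine hnocopy ⟨h, hinj, fun p => ?_, hiff⟩
    by_cases hp : p = a
    · rw [hp, hha]; exact hCxF
    · rw [hother p hp]; exact fF p hp

lemma core {P : Type*} [PartialOrder P] (a b : P) (hlegs : IsLegs P a b)
    (n : ℕ) (F : Finset (Finset ℕ)) (hsat : IsIndPSaturated n P F)
    (x : ℕ) (hx : x ∈ Finset.Icc 1 n) (hxF : ({x} : Finset ℕ) ∉ F)
    (Cx : Finset ℕ) (hCxF : Cx ∈ F) (hxCx : x ∉ Cx)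
    (hmax : ∀ C : Finset ℕ, IsPartner P a b F x C → C.card ≤ Cx.card)
    (g : P → Finset ℕ) (ginj : Function.Injective g)
    (gmem : ∀ p, g p ∈ insert ({x} : Finset ℕ) F)
    (giff : ∀ p q : P, p ≤ q ↔ g p ⊆ g q)
    (hga : g a = {x}) (hgb : g b = Cx) : insert x Cx ∈ F := by
  obtain ⟨hsub, hnocopy, hsatur⟩ := hsat
  obtain ⟨hab, hba, hc⟩ := hlegs
  have hCne : ¬ Cx ⊆ ({x} : Finset ℕ) :=
    fun h => hba ((giff b a).2 (by rw [hga, hgb]; exact h))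
  by_contra hG
  have hGsub : insert x Cx ⊆ Finset.Icc 1 n := insert_subset hx (hsub Cx hCxF)
  obtain ⟨f, finj, fmem, fiff⟩ := hsatur _ hGsub hG
  obtain ⟨p0, hp0⟩ : ∃ p0, f p0 = insert x Cx := by
    by_contra hno
    push_neg at hno
    exact hnocopy ⟨f, finj, fun p => (mem_insert.1 (fmem p)).resolve_left (hno p), fiff⟩
  have fF : ∀ p, p ≠ p0 → f p ∈ F := fun p hp =>
    (mem_insert.1 (fmem p)).resolve_left (fun h => hp (finj (h.trans hp0.symm)))
  by_cases hp0a : p0 = a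
  · exact leg_case a b ⟨hab, hba, hc⟩ F hnocopy x hxF Cx hCxF hxCx hCne hmax f finj fiff
      (by rw [← hp0a]; exact hp0) (fun p hp => fF p (fun hh => hp (hh.trans hp0a)))
  by_cases hp0b : p0 = b
  · exact leg_case b a ⟨hba, hab, fun c h1 h2 => (hc c h2 h1).symm⟩ F hnocopy x hxF Cx hCxF
      hxCx hCne (fun C hC => hmax C (partner_symm hC)) f finj fiff
      (by rw [← hp0b]; exact hp0) (fun p hp => fF p (fun hh => hp (hh.trans hp0b)))
  -- `p0` is not a leg: combine legs of `f` with the top of `g`: copy in `F`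
  have hap0 : a < p0 := (hc p0 hp0a hp0b).1
  have hbp0 : b < p0 := (hc p0 hp0a hp0b).2
  have hfaG : f a ⊆ insert x Cx := hp0 ▸ (fiff a p0).1 hap0.le
  have hfbG : f b ⊆ insert x Cx := hp0 ▸ (fiff b p0).1 hbp0.le
  have hfaF : f a ∈ F := fF a (fun hh => hp0a hh.symm)
  have hfbF : f b ∈ F := fF b (fun hh => hp0b hh.symm)
  have gF : ∀ p, p ≠ a → g p ∈ F := fun p hp =>
    (mem_insert.1 (gmem p)).resolve_left (fun hh => hp (ginj (hh.trans hga.symm)))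
  have gtop : ∀ c, c ≠ a → c ≠ b → insert x Cx ⊆ g c := by
    intro c h1 h2
    apply insert_subset
    · exact singleton_subset_iff.1 (by rw [← hga]; exact (giff a c).1 (hc c h1 h2).1.le)
    · rw [← hgb]; exact (giff b c).1 (hc c h1 h2).2.le
  have hane : a ≠ b := fun hh => hab hh.le
  obtain ⟨h, hha, hhb, hhc⟩ :
      ∃ h : P → Finset ℕ, h a = f a ∧ h b = f b ∧ ∀ c, c ≠ a → c ≠ b → h c = g c :=
    by classical exact ⟨fun c => if c = a then f a else if c = b then f b else g c, by simp,
      by simp [Ne.symm hane], fun c h1 h2 => by simp [h1, h2]⟩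
  have hiff : ∀ p q : P, p ≤ q ↔ h p ⊆ h q := by
    intro p q
    by_cases hpa : p = a <;> by_cases hqa : q = a
    · rw [hpa, hqa]; simp
    · rw [hpa]
      by_cases hqb : q = b
      · rw [hqb, hha, hhb]; exact fiff a b
      · rw [hha, hhc q hqa hqb]
        exact ⟨fun _ => hfaG.trans (gtop q hqa hqb), fun _ => (hc q hqa hqb).1.le⟩
    · rw [hqa]
      by_cases hpb : p = b
      · rw [hpb, hhb, hha]; exact fiff b a
      · rw [hhc p hpa hpb, hha]
        constructor
        · intro hle; exact absurd hle (hc p hpa hpb).1.not_ge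
        · intro hss
          have : f a = f p0 := by
            rw [hp0]; exact subset_antisymm hfaG ((gtop p hpa hpb).trans hss)
          exact absurd (finj this).symm hp0a
    · by_cases hpb : p = b <;> by_cases hqb : q = b
      · rw [hpb, hqb]; simp
      · rw [hpb, hhb, hhc q hqa hqb]
        exact ⟨fun _ => hfbG.trans (gtop q hqa hqb), fun _ => (hc q hqa hqb).2.le⟩
      · rw [hqb, hhc p hpa hpb, hhb]
        constructor
        · intro hle; exact absurd hle (hc p hpa hpb).2.not_ge
        · intro hss
          have : f b = f p0 := by
            rw [hp0]; exact subset_antisymm hfbG ((gtop p hpa hpb).trans hss)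
          exact absurd (finj this).symm hp0b
      · rw [hhc p hpa hpb, hhc q hqa hqb]; exact giff p q
  have hinj : Function.Injective h := fun p q hpq =>
    le_antisymm ((hiff p q).2 (by rw [hpq])) ((hiff q p).2 (by rw [hpq]))
  refine hnocopy ⟨h, hinj, fun p => ?_, hiff⟩
  by_cases hpa : p = a
  · rw [hpa, hha]; exact hfaF
  by_cases hpb : p = b
  · rw [hpb, hhb]; exact hfbF
  · rw [hhc p hpa hpb]; exact gF p hpa

/-- if `{x} ∉ F` and `Cₓ` is a partner of `x` of maximum
cardinality, then `Cₓ ∪ {x} ∈ F` and `Cₓ ∪ {x} ≠ ∅`. -/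
theorem stmt12 (P : Type*) [PartialOrder P] [Fintype P] (a b : P)
    (hlegs : IsLegs P a b)
    (n : ℕ) (F : Finset (Finset ℕ)) (hsat : IsIndPSaturated n P F)
    (x : ℕ) (hx : x ∈ Finset.Icc 1 n) (hxF : ({x} : Finset ℕ) ∉ F)
    (Cx : Finset ℕ) (hCx : IsPartner P a b F x Cx)
    (hmax : ∀ C : Finset ℕ, IsPartner P a b F x C → C.card ≤ Cx.card) :
    insert x Cx ∈ F ∧ insert x Cx ≠ ∅ := by
  refine ⟨?_, insert_ne_empty _ _⟩
  by_cases hxCx : x ∈ Cx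
  · rw [insert_eq_self.2 hxCx]; exact hCx.1
  · obtain ⟨hCxF, g, ginj, gmem, giff, gset⟩ := hCx
    rcases Set.pair_eq_pair_iff.1 gset with ⟨h1, h2⟩ | ⟨h1, h2⟩
    · exact core a b hlegs n F hsat x hx hxF Cx hCxF hxCx hmax g ginj gmem giff h1 h2
    · exact core b a (legs_symm hlegs) n F hsat x hx hxF Cx hCxF hxCx
        (fun C hC => hmax C (partner_symm hC)) g ginj gmem giff h2 h1
end

section
/- Let P be a finite poset with legs a, b, and let F ⊆ 2^[n] be an induced P-saturated family. For each x ∈ [n] with {x} ∉ F, fix a partner C_x of x of maximum cardinality among all partners of x, and define f : [n] → F ∖ {∅} by f(x) = {x} if {x} ∈ F and f(x) = C_x ∪ {x} otherwise. Then f is injective. -/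
open Finset

lemma key {P : Type*} [PartialOrder P] {a b : P} (hlegs : IsLegs P a b)
    {F : Finset (Finset ℕ)} {x y : ℕ} (hxy : x ≠ y)
    {Cx Cy : Finset ℕ} (hCyF : Cy ∈ F) (hyCy : y ∉ Cy)
    {g : P → Finset ℕ} (hginj : Function.Injective g)
    (hgmem : ∀ p, g p ∈ insert ({x} : Finset ℕ) F)
    (hgord : ∀ p q : P, p ≤ q ↔ g p ⊆ g q)
    (hga : g a = {x}) (hgb : g b = Cx)
    (hins : insert x Cx = insert y Cy) :
    ContainsIndCopy P F := by
  have hab : a ≠ b := fun h => hlegs.1 (h ▸ le_refl a)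
  have hxCx : x ∉ Cx := by
    intro h
    exact hlegs.1 ((hgord a b).2 (by rw [hga, hgb]; exact singleton_subset_iff.2 h))
  have hxCy : x ∈ Cy := by
    have : x ∈ insert y Cy := hins ▸ mem_insert_self x Cx
    exact (mem_insert.1 this).resolve_left hxy
  have hyCx : y ∈ Cx := by
    have : y ∈ insert x Cx := hins.symm ▸ mem_insert_self y Cy
    exact (mem_insert.1 this).resolve_left (Ne.symm hxy)
  have hmemF : ∀ p : P, p ≠ a → g p ∈ F := by
    intro p hp
    rcases mem_insert.1 (hgmem p) with h | h
    · exact absurd (hginj (h.trans hga.symm)) hp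
    · exact h
  have htop : ∀ c : P, c ≠ a → c ≠ b → insert y Cy ⊆ g c := by
    intro c hca hcb
    rw [← hins]
    refine insert_subset ?_ ?_
    · have := (hgord a c).1 (hlegs.2.2 c hca hcb).1.le
      rw [hga] at this; exact singleton_subset_iff.1 this
    · have := (hgord b c).1 (hlegs.2.2 c hca hcb).2.le
      rw [hgb] at this; exact this
  have hCyne : Cy ≠ Cx := fun h => hxCx (h ▸ hxCy)
  classical
  refine ⟨fun p => if p = a then Cy else g p, ?_, ?_, ?_⟩
  · intro p q h
    simp only at h
    by_cases hp : p = a <;> by_cases hq : q = a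
    · rw [hp, hq]
    · rw [if_pos hp, if_neg hq] at h
      by_cases hqb : q = b
      · exact absurd (h.trans (hqb ▸ hgb)) hCyne
      · exact absurd (h ▸ (htop q hq hqb (mem_insert_self y Cy))) hyCy
    · rw [if_neg hp, if_pos hq] at h
      by_cases hpb : p = b
      · exact absurd (h.symm.trans (hpb ▸ hgb)) hCyne
      · exact absurd (h.symm ▸ (htop p hp hpb (mem_insert_self y Cy))) hyCy
    · rw [if_neg hp, if_neg hq] at h
      exact hginj h
  · intro p
    by_cases hp : p = a
    · simpa [hp] using hCyF
    · simpa [hp] using hmemF p hp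
  · intro p q
    simp only
    by_cases hp : p = a <;> by_cases hq : q = a
    · rw [hp, hq]; simp
    · rw [if_pos hp, if_neg hq, hp]
      by_cases hqb : q = b
      · subst hqb
        constructor
        · intro h; exact absurd h hlegs.1
        · intro h; rw [hgb] at h; exact absurd (h hxCy) hxCx
      · constructor
        · intro _; exact (subset_insert y Cy).trans (htop q hq hqb)
        · intro _; exact (hlegs.2.2 q hq hqb).1.le
    · rw [if_neg hp, if_pos hq, hq]
      by_cases hpb : p = b
      · subst hpb
        constructor
        · intro h; exact absurd h hlegs.2.1
        · intro h; rw [hgb] at h; exact absurd (h hyCx) hyCy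
      · constructor
        · intro h
          exact absurd (le_antisymm h (hlegs.2.2 p hp hpb).1.le) hp
        · intro h
          exact absurd (h (htop p hp hpb (mem_insert_self y Cy))) hyCy
    · rw [if_neg hp, if_neg hq]
      exact hgord p q

lemma partner_facts {P : Type*} [PartialOrder P] {a b : P} (hlegs : IsLegs P a b)
    {F : Finset (Finset ℕ)} {x : ℕ} {C : Finset ℕ} (hxF : ({x} : Finset ℕ) ∉ F)
    (hp : IsPartner P a b F x C) :
    x ∉ C ∧ ∃ g : P → Finset ℕ, Function.Injective g ∧
      (∀ p, g p ∈ insert ({x} : Finset ℕ) F) ∧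
      (∀ p q : P, p ≤ q ↔ g p ⊆ g q) ∧
      ((g a = {x} ∧ g b = C) ∨ (g b = {x} ∧ g a = C)) := by
  obtain ⟨hCF, g, hginj, hgmem, hgord, hset⟩ := hp
  have hab : a ≠ b := fun h => hlegs.1 (h ▸ le_refl a)
  have hxC : ({x} : Finset ℕ) ≠ C := fun h => hxF (h ▸ hCF)
  have hga : g a = {x} ∨ g a = C := by
    have : g a ∈ ({({x} : Finset ℕ), C} : Set (Finset ℕ)) := hset ▸ Set.mem_insert _ _
    simpa using this
  have hgb : g b = {x} ∨ g b = C := by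
    have : g b ∈ ({({x} : Finset ℕ), C} : Set (Finset ℕ)) := by
      rw [← hset]; exact Set.mem_insert_of_mem _ rfl
    simpa using this
  have horient : (g a = {x} ∧ g b = C) ∨ (g b = {x} ∧ g a = C) := by
    rcases hga with h1 | h1 <;> rcases hgb with h2 | h2
    · exact absurd (hginj (h1.trans h2.symm)) hab
    · exact Or.inl ⟨h1, h2⟩
    · exact Or.inr ⟨h2, h1⟩
    · exact absurd (hginj (h1.trans h2.symm)) hab
  have hxnC : x ∉ C := by
    rcases horient with ⟨h1, h2⟩ | ⟨h1, h2⟩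
    · intro hx
      exact hlegs.1 ((hgord a b).2 (by rw [h1, h2]; exact singleton_subset_iff.2 hx))
    · intro hx
      exact hlegs.2.1 ((hgord b a).2 (by rw [h1, h2]; exact singleton_subset_iff.2 hx))
  exact ⟨hxnC, g, hginj, hgmem, hgord, horient⟩

/-- the map `x ↦ {x}` (if `{x} ∈ F`) and `x ↦ Cₓ ∪ {x}`
(otherwise, `Cₓ` a maximum-cardinality partner of `x`) is injective on `[n]`. -/
theorem stmt13 (P : Type*) [PartialOrder P] [Fintype P] (a b : P)
    (hlegs : IsLegs P a b)
    (n : ℕ) (F : Finset (Finset ℕ)) (hsat : IsIndPSaturated n P F)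
    (Cx : ℕ → Finset ℕ)
    (hCx : ∀ x ∈ Finset.Icc 1 n, ({x} : Finset ℕ) ∉ F →
      IsPartner P a b F x (Cx x) ∧
      ∀ C : Finset ℕ, IsPartner P a b F x C → C.card ≤ (Cx x).card) :
    Set.InjOn
      (fun x : ℕ => if ({x} : Finset ℕ) ∈ F then ({x} : Finset ℕ) else insert x (Cx x))
      (Finset.Icc 1 n : Finset ℕ) := by
  intro x hx y hy hfeq
  simp only [Finset.coe_Icc, Set.mem_Icc] at hx hy
  have hx' : x ∈ Finset.Icc 1 n := mem_Icc.2 hx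
  have hy' : y ∈ Finset.Icc 1 n := mem_Icc.2 hy
  by_contra hxy
  by_cases hxF : ({x} : Finset ℕ) ∈ F <;> by_cases hyF : ({y} : Finset ℕ) ∈ F
  · simp only [if_pos hxF, if_pos hyF] at hfeq
    exact hxy (Finset.singleton_injective hfeq)
  · simp only [if_pos hxF, if_neg hyF] at hfeq
    have : y ∈ ({x} : Finset ℕ) := hfeq ▸ mem_insert_self y (Cx y)
    exact hxy (mem_singleton.1 this).symm
  · simp only [if_neg hxF, if_pos hyF] at hfeq
    have : x ∈ ({y} : Finset ℕ) := hfeq.symm ▸ mem_insert_self x (Cx x)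
    exact hxy (mem_singleton.1 this)
  · simp only [if_neg hxF, if_neg hyF] at hfeq
    obtain ⟨hpy, _⟩ := hCx y hy' hyF
    obtain ⟨hpx, _⟩ := hCx x hx' hxF
    obtain ⟨hynCy, _⟩ := partner_facts hlegs hyF hpy
    obtain ⟨-, g, hginj, hgmem, hgord, horient⟩ := partner_facts hlegs hxF hpx
    have hCyF : Cx y ∈ F := hpy.1
    rcases horient with ⟨h1, h2⟩ | ⟨h1, h2⟩
    · exact hsat.2.1 (key hlegs hxy hCyF hynCy hginj hgmem hgord h1 h2 hfeq)
    · exact hsat.2.1 (key (legs_symm hlegs) hxy hCyF hynCy hginj hgmem hgord h1 h2 hfeq)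
end

section
/- Let P be a finite poset with legs a, b (two incomparable elements each strictly smaller than every element of P ∖ {a, b}). Then every induced P-saturated family F ⊆ 2^[n] contains the empty set ∅. -/
open Finset

/-- if `P` has legs, every induced `P`-saturated family contains `∅`. -/
theorem stmt14 (P : Type*) [PartialOrder P] [Fintype P] (a b : P)
    (hlegs : IsLegs P a b)
    (n : ℕ) (F : Finset (Finset ℕ)) (hsat : IsIndPSaturated n P F) :
    (∅ : Finset ℕ) ∈ F := by
  by_contra h
  obtain ⟨f, hinj, hmem, hiff⟩ := hsat.2.2 ∅ (Finset.empty_subset _) h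
  by_cases he : ∃ p, f p = ∅
  · obtain ⟨p₀, hp₀⟩ := he
    have ha : p₀ ≤ a := (hiff p₀ a).mpr (by simp [hp₀])
    have hb : p₀ ≤ b := (hiff p₀ b).mpr (by simp [hp₀])
    rcases eq_or_ne p₀ a with rfl | hna
    · exact hlegs.1 hb
    rcases eq_or_ne p₀ b with rfl | hnb
    · exact hlegs.2.1 ha
    exact absurd ha (not_le_of_gt (hlegs.2.2 p₀ hna hnb).1)
  · push_neg at he
    exact hsat.2.1 ⟨f, hinj, fun p => by
      have := hmem p
      rw [Finset.mem_insert] at this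
      exact this.resolve_left (Finset.nonempty_iff_ne_empty.mp (he p)), hiff⟩
end
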